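/- (Ky Fan) Let H be a Hermitian operator on a D-dimensional complex Hilbert space with eigenvalues E_1 ≤ E_2 ≤ … ≤ E_D. Then for each k ≤ D, the sum E_1 + … + E_k equals the minimum of Tr(P_V H) over all k-dimensional subspaces V, where P_V is the orthogonal projection onto V. -/

import Mathlib

open Finset Matrix

lemma card_filter_lt_fin (D k : ℕ) (hk : k ≤ D) :
    (Finset.univ.filter (fun j : Fin D => (j : ℕ) < k)).card = k := by
  have h : Finset.filter (fun a => a < k) (Finset.range D) = Finset.range k := by
    ext a; simp; omega
  rw [Finset.card_filter, Fin.sum_univ_eq_sum_range (fun i => if i < k then 1 else 0),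
    ← Finset.sum_filter, h]
  simp

/-- LP core: minimum of `∑ E j * s j` over the "fractional k-subsets" `s`. -/
lemma key_ineq {D k : ℕ} (hk : k ≤ D) (E : Fin D → ℝ) (hE : Monotone E)
    (s : Fin D → ℝ) (h0 : ∀ j, 0 ≤ s j) (h1 : ∀ j, s j ≤ 1)
    (hsum : ∑ j, s j = (k : ℝ)) :
    ∑ j ∈ Finset.univ.filter (fun j : Fin D => (j : ℕ) < k), E j ≤ ∑ j, E j * s j := by
  rcases Nat.eq_zero_or_pos k with hk0 | hk0
  · subst hk0
    have hz : ∀ j, s j = 0 := by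
      intro j
      have := Finset.sum_eq_zero_iff_of_nonneg (fun i _ => h0 i) |>.mp (by simpa using hsum)
      exact this j (Finset.mem_univ j)
    simp [hz]
  · have hD : 0 < D := lt_of_lt_of_le hk0 hk
    set c : ℝ := E ⟨k - 1, by omega⟩ with hc
    have hle : ∀ j : Fin D, (j : ℕ) < k → E j ≤ c := fun j hj =>
      hE (by simp [Fin.le_def]; omega)
    have hge : ∀ j : Fin D, ¬ (j : ℕ) < k → c ≤ E j := fun j hj =>
      hE (by simp [Fin.le_def]; omega)
    have key : ∀ j : Fin D,
        (if (j : ℕ) < k then E j else 0) + c * s j - c * (if (j : ℕ) < k then 1 else 0)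
          ≤ E j * s j := by
      intro j
      by_cases hj : (j : ℕ) < k
      · simp only [if_pos hj]
        nlinarith [hle j hj, h1 j, h0 j]
      · simp only [if_neg hj]
        nlinarith [hge j hj, h0 j]
    calc ∑ j ∈ Finset.univ.filter (fun j : Fin D => (j : ℕ) < k), E j
        = ∑ j : Fin D, ((if (j : ℕ) < k then E j else 0) + c * s j
            - c * (if (j : ℕ) < k then 1 else 0)) := by
          rw [Finset.sum_sub_distrib, Finset.sum_add_distrib, ← Finset.mul_sum, hsum,
            ← Finset.mul_sum, ← Finset.sum_filter, ← Finset.sum_filter]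
          simp [card_filter_lt_fin D k hk]
      _ ≤ ∑ j, E j * s j := Finset.sum_le_sum fun j _ => key j

lemma diag_entry_eq {D : ℕ} (P : Matrix (Fin D) (Fin D) ℂ)
    (hP : P.IsHermitian) (hPP : P * P = P) (i : Fin D) :
    P i i = ((∑ j, Complex.normSq (P j i) : ℝ) : ℂ) := by
  conv_lhs => rw [← hPP]
  nth_rewrite 1 [← hP]
  simp [Matrix.mul_apply, Matrix.conjTranspose_apply, Complex.normSq_eq_conj_mul_self]

lemma trace_eq_rank {D : ℕ} (P : Matrix (Fin D) (Fin D) ℂ)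
    (hP : P.IsHermitian) (hPP : P * P = P) :
    P.trace = (P.rank : ℂ) := by
  have hd : star (hP.eigenvectorUnitary : Matrix (Fin D) (Fin D) ℂ) * P
      * (hP.eigenvectorUnitary : Matrix (Fin D) (Fin D) ℂ)
      = Matrix.diagonal (RCLike.ofReal ∘ hP.eigenvalues) := by
    simpa using hP.conjStarAlgAut_star_eigenvectorUnitary
  set V : Matrix (Fin D) (Fin D) ℂ := (hP.eigenvectorUnitary : Matrix (Fin D) (Fin D) ℂ) with hV
  have hVU : V * star V = 1 := Matrix.mem_unitaryGroup_iff.mp hP.eigenvectorUnitary.2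
  have hUV : star V * V = 1 := Matrix.mem_unitaryGroup_iff'.mp hP.eigenvectorUnitary.2
  have hidem : ∀ i, hP.eigenvalues i = 0 ∨ hP.eigenvalues i = 1 := by
    intro i
    have h2 : (star V * P * V) * (star V * P * V) = star V * P * V := by
      simp only [Matrix.mul_assoc]
      rw [← Matrix.mul_assoc V (star V), hVU, Matrix.one_mul, ← Matrix.mul_assoc P P, hPP]
    rw [hd, Matrix.diagonal_mul_diagonal] at h2
    have h3 := congrFun (congrFun h2 i) i
    simp only [Matrix.diagonal_apply_eq, Function.comp_apply] at h3
    have h4 : hP.eigenvalues i * hP.eigenvalues i = hP.eigenvalues i := by exact_mod_cast h3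
    rcases mul_eq_zero.mp (show hP.eigenvalues i * (hP.eigenvalues i - 1) = 0 by nlinarith)
      with h | h
    · exact Or.inl h
    · exact Or.inr (by linarith)
  have htr : P.trace = ∑ i, (hP.eigenvalues i : ℂ) := by
    conv_lhs => rw [hP.spectral_theorem, Unitary.conjStarAlgAut_apply]
    rw [Matrix.trace_mul_cycle, hUV, Matrix.one_mul, Matrix.trace_diagonal]
    rfl
  rw [htr, hP.rank_eq_card_non_zero_eigs]
  classical
  rw [Fintype.card_subtype, Finset.card_filter]
  push_cast
  apply Finset.sum_congr rfl
  intro i _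
  rcases hidem i with h | h <;> simp [h]

theorem ky_fan {D : ℕ} (H : Matrix (Fin D) (Fin D) ℂ) (hH : H.IsHermitian)
    (E : Fin D → ℝ) (hEmono : Monotone E)
    (hEeig : ∃ σ : Equiv.Perm (Fin D), E = hH.eigenvalues ∘ σ)
    (k : ℕ) (hk : k ≤ D) :
    IsLeast {x : ℝ | ∃ P : Matrix (Fin D) (Fin D) ℂ,
        P.IsHermitian ∧ P * P = P ∧ P.rank = k ∧ (P * H).trace = (x : ℂ)}
      (∑ j ∈ Finset.univ.filter (fun j : Fin D => (j : ℕ) < k), E j) := by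
  classical
  obtain ⟨σ, hσ⟩ := hEeig
  set e : Fin D → ℝ := hH.eigenvalues with he
  set U : Matrix (Fin D) (Fin D) ℂ := (hH.eigenvectorUnitary : Matrix (Fin D) (Fin D) ℂ) with hU
  have hVU : U * star U = 1 := Matrix.mem_unitaryGroup_iff.mp hH.eigenvectorUnitary.2
  have hUV : star U * U = 1 := Matrix.mem_unitaryGroup_iff'.mp hH.eigenvectorUnitary.2
  have hdetU : IsUnit U.det :=
    IsUnit.of_mul_eq_one _ (by rw [← Matrix.det_mul, hVU, Matrix.det_one])
  have hdetU' : IsUnit (star U).det :=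
    IsUnit.of_mul_eq_one _ (by rw [← Matrix.det_mul, hUV, Matrix.det_one])
  have hspec : H = U * Matrix.diagonal (RCLike.ofReal ∘ e) * star U := hH.spectral_theorem
  constructor
  · -- membership
    set m : Fin D → ℂ := fun i => if ((σ.symm i : Fin D) : ℕ) < k then 1 else 0 with hm
    have hmstar : ∀ i, star (m i) = m i := by
      intro i; by_cases h : ((σ.symm i : Fin D) : ℕ) < k <;> simp [hm, h]
    have hmm : ∀ i, m i * m i = m i := by
      intro i; by_cases h : ((σ.symm i : Fin D) : ℕ) < k <;> simp [hm, h]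
    refine ⟨U * Matrix.diagonal m * star U, ?_, ?_, ?_, ?_⟩
    · -- Hermitian
      have hdm : (Matrix.diagonal m)ᴴ = Matrix.diagonal m := by
        rw [Matrix.diagonal_conjTranspose, show star m = m from funext hmstar]
      unfold Matrix.IsHermitian
      rw [Matrix.conjTranspose_mul, Matrix.conjTranspose_mul, hdm,
        Matrix.star_eq_conjTranspose, Matrix.conjTranspose_conjTranspose, Matrix.mul_assoc]
    · -- idempotent
      simp only [Matrix.mul_assoc]
      rw [← Matrix.mul_assoc (star U) U, hUV, Matrix.one_mul,
        ← Matrix.mul_assoc (Matrix.diagonal m) (Matrix.diagonal m),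
        Matrix.diagonal_mul_diagonal, show (fun i => m i * m i) = m from funext hmm]
    · -- rank
      rw [Matrix.rank_mul_eq_left_of_isUnit_det _ _ hdetU',
        Matrix.rank_mul_eq_right_of_isUnit_det _ _ hdetU, Matrix.rank_diagonal,
        Fintype.card_subtype]
      rw [show (Finset.univ.filter fun i => m i ≠ 0)
          = Finset.univ.filter (fun i => ((σ.symm i : Fin D) : ℕ) < k) from by
        apply Finset.filter_congr; intro i _
        by_cases h : ((σ.symm i : Fin D) : ℕ) < k <;> simp [hm, h]]
      have hcard : (Finset.univ.filter (fun i : Fin D => ((σ.symm i : Fin D) : ℕ) < k)).card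
          = (Finset.univ.filter (fun j : Fin D => (j : ℕ) < k)).card := by
        apply Finset.card_nbij' σ.symm σ
        · intro i hi; simpa using (Finset.mem_filter.mp hi).2
        · intro j hj; simp only [Finset.mem_coe, Finset.mem_filter, Finset.mem_univ, true_and,
            Equiv.symm_apply_apply]; simpa using (Finset.mem_filter.mp hj).2
        · intro i _; simp
        · intro j _; simp
      rw [hcard, card_filter_lt_fin D k hk]
    · -- trace
      rw [hspec]
      rw [show U * Matrix.diagonal m * star U * (U * Matrix.diagonal (RCLike.ofReal ∘ e) * star U)
          = U * (Matrix.diagonal m * Matrix.diagonal (RCLike.ofReal ∘ e)) * star U from by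
        simp only [Matrix.mul_assoc]
        rw [← Matrix.mul_assoc (star U) U, hUV, Matrix.one_mul]]
      rw [Matrix.trace_mul_cycle, ← Matrix.mul_assoc, hUV, Matrix.one_mul,
        Matrix.diagonal_mul_diagonal, Matrix.trace_diagonal]
      have : ∀ i : Fin D, m i * (RCLike.ofReal ∘ e) i
          = if ((σ.symm i : Fin D) : ℕ) < k then (e i : ℂ) else 0 := by
        intro i; by_cases h : ((σ.symm i : Fin D) : ℕ) < k <;> simp [hm, h, RCLike.ofReal_alg]
      rw [Finset.sum_congr rfl fun i _ => this i]
      rw [← Equiv.sum_comp σ (fun i => if ((σ.symm i : Fin D) : ℕ) < k then (e i : ℂ) else 0)]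
      simp only [Equiv.symm_apply_apply]
      push_cast
      rw [Finset.sum_filter]
      apply Finset.sum_congr rfl
      intro j _
      by_cases h : (j : ℕ) < k <;> simp [h, hσ]
  · -- lower bound
    rintro x ⟨P, hP, hPP, hrank, htrace⟩
    set Q : Matrix (Fin D) (Fin D) ℂ := star U * P * U with hQ
    have hQH : Q.IsHermitian := by
      unfold Matrix.IsHermitian
      simp only [hQ, Matrix.conjTranspose_mul, Matrix.star_eq_conjTranspose,
        Matrix.conjTranspose_conjTranspose, hP.eq, Matrix.mul_assoc]
    have hQQ : Q * Q = Q := by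
      simp only [hQ, Matrix.mul_assoc]
      rw [← Matrix.mul_assoc U (star U), hVU, Matrix.one_mul, ← Matrix.mul_assoc P P, hPP]
    set t : Fin D → ℝ := fun i => ∑ j, Complex.normSq (Q j i) with ht
    have hQdiag : ∀ i, Q i i = (t i : ℂ) := fun i => diag_entry_eq Q hQH hQQ i
    have ht0 : ∀ i, 0 ≤ t i := fun i =>
      Finset.sum_nonneg fun j _ => Complex.normSq_nonneg _
    have hoQH : (1 - Q).IsHermitian := (Matrix.isHermitian_one).sub hQH
    have hoQQ : (1 - Q) * (1 - Q) = 1 - Q := by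
      rw [Matrix.sub_mul, Matrix.mul_sub, Matrix.mul_sub, hQQ]
      simp
    have ht1 : ∀ i, t i ≤ 1 := by
      intro i
      have h := diag_entry_eq (1 - Q) hoQH hoQQ i
      have h2 : (1 - Q) i i = 1 - (t i : ℂ) := by
        simp [Matrix.sub_apply, Matrix.one_apply, hQdiag i]
      rw [h2] at h
      have h3 : (1 : ℝ) - t i = ∑ j, Complex.normSq ((1 - Q) j i) := by
        exact_mod_cast h
      have h4 : 0 ≤ ∑ j, Complex.normSq ((1 - Q) j i) :=
        Finset.sum_nonneg fun j _ => Complex.normSq_nonneg _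
      linarith
    have htsum : ∑ i, t i = (k : ℝ) := by
      have h1 : Q.trace = P.trace := by
        rw [hQ, Matrix.trace_mul_cycle, hVU, Matrix.one_mul]
      have h2 : P.trace = (k : ℂ) := by
        rw [trace_eq_rank P hP hPP, hrank]
      have h3 : Q.trace = ((∑ i, t i : ℝ) : ℂ) := by
        rw [Matrix.trace]
        push_cast
        exact Finset.sum_congr rfl fun i _ => hQdiag i
      have h4 : ((∑ i, t i : ℝ) : ℂ) = ((k : ℕ) : ℂ) := (h3.symm.trans h1).trans h2
      exact_mod_cast h4
    have hx : x = ∑ i, e i * t i := by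
      have h1 : (P * H).trace = ∑ i, (e i : ℂ) * Q i i := by
        rw [hspec, show P * (U * Matrix.diagonal (RCLike.ofReal ∘ e) * star U)
            = (P * U) * Matrix.diagonal (RCLike.ofReal ∘ e) * star U from by
          simp only [Matrix.mul_assoc]]
        rw [Matrix.trace_mul_cycle, ← Matrix.mul_assoc (star U) P U]
        rw [Matrix.trace]
        apply Finset.sum_congr rfl
        intro i _
        rw [Matrix.diag, Matrix.mul_apply, Finset.sum_eq_single i]
        · simp only [Matrix.diagonal_apply_eq, Function.comp_apply]
          rw [mul_comm]; rfl
        · intro b _ hb; simp [Matrix.diagonal_apply, hb]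
        · simp
      have h2 : ((x : ℂ)) = ((∑ i, e i * t i : ℝ) : ℂ) := by
        rw [← htrace, h1]
        push_cast
        exact Finset.sum_congr rfl fun i _ => by rw [hQdiag i]
      exact_mod_cast h2
    rw [hx]
    have := key_ineq hk E hEmono (fun j => t (σ j)) (fun j => ht0 _) (fun j => ht1 _)
      (by rw [Equiv.sum_comp σ t]; exact htsum)
    calc ∑ j ∈ Finset.univ.filter (fun j : Fin D => (j : ℕ) < k), E j
        ≤ ∑ j, E j * t (σ j) := this
      _ = ∑ i, e i * t i := by
          rw [← Equiv.sum_comp σ (fun i => e i * t i)]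
          exact Finset.sum_congr rfl fun j _ => by rw [hσ]; rfl
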